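/- Let a, b ∈ [0,1), let û, v̂ ∈ ℝ³ be Euclidean unit vectors, and set f(a,b) = (a² − b²)² − 8(a² + b² − 2). Then f(a,b) > 0, and the points x, y ∈ ℝ⁴ defined by x⃗ = 4a û/√f(a,b), x₀ = √(1 + ‖x⃗‖²), y⃗ = 4b v̂/√f(a,b), y₀ = √(1 + ‖y⃗‖²) lie on the hyperboloid H³ and satisfy Φ(x,y) = (a û, b v̂). -/

import Mathlib

noncomputable section

/-- Minkowski inner product on ℝ⁴: ⟨x,y⟩ = −x₀y₀ + x₁y₁ + x₂y₂ + x₃y₃. -/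
def mink (x y : Fin 4 → ℝ) : ℝ :=
  -(x 0 * y 0) + x 1 * y 1 + x 2 * y 2 + x 3 * y 3

/-- The hyperboloid model of hyperbolic 3-space. -/
def Hyp : Set (Fin 4 → ℝ) := {x | 0 < x 0 ∧ mink x x = -1}

/-- Spatial part x⃗ of x = (x₀, x⃗). -/
def spat (x : Fin 4 → ℝ) : Fin 3 → ℝ := fun i => x i.succ

/-- The Pogorelov map Φ(x,y) = (2x⃗/(x₀+y₀), 2y⃗/(x₀+y₀)). -/
def pog (x y : Fin 4 → ℝ) : (Fin 3 → ℝ) × (Fin 3 → ℝ) :=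
  ((2 / (x 0 + y 0)) • spat x, (2 / (x 0 + y 0)) • spat y)

/-- Euclidean norm on ℝ³. -/
def enorm3 (a : Fin 3 → ℝ) : ℝ := Real.sqrt (a 0 ^ 2 + a 1 ^ 2 + a 2 ^ 2)

/-- f(a,b) = (a² − b²)² − 8(a² + b² − 2). -/
def fab (a b : ℝ) : ℝ := (a ^ 2 - b ^ 2) ^ 2 - 8 * (a ^ 2 + b ^ 2 - 2)

/-- For a, b ∈ [0,1) and unit vectors û, v̂, f(a,b) > 0 and the explicitly
constructed points x, y lie on H³ and satisfy Φ(x,y) = (a û, b v̂). -/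
theorem explicit_preimage (a b : ℝ) (ha0 : 0 ≤ a) (ha1 : a < 1)
    (hb0 : 0 ≤ b) (hb1 : b < 1) (u v : Fin 3 → ℝ)
    (hu : enorm3 u = 1) (hv : enorm3 v = 1) :
    0 < fab a b ∧
    (let xv : Fin 3 → ℝ := (4 * a / Real.sqrt (fab a b)) • u
     let yv : Fin 3 → ℝ := (4 * b / Real.sqrt (fab a b)) • v
     let x : Fin 4 → ℝ := Fin.cons (Real.sqrt (1 + enorm3 xv ^ 2)) xv
     let y : Fin 4 → ℝ := Fin.cons (Real.sqrt (1 + enorm3 yv ^ 2)) yv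
     x ∈ Hyp ∧ y ∈ Hyp ∧ pog x y = (a • u, b • v)) := by
  have ha2 : a ^ 2 < 1 := by nlinarith
  have hb2 : b ^ 2 < 1 := by nlinarith
  have hF : 0 < fab a b := by unfold fab; nlinarith [sq_nonneg (a ^ 2 - b ^ 2)]
  refine ⟨hF, ?_⟩
  intro xv yv x y
  have hs : 0 < Real.sqrt (fab a b) := Real.sqrt_pos.mpr hF
  have hs2 : Real.sqrt (fab a b) ^ 2 = fab a b := Real.sq_sqrt hF.le
  set s := Real.sqrt (fab a b) with hs_def
  have hu2 : u 0 ^ 2 + u 1 ^ 2 + u 2 ^ 2 = 1 := by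
    have h := congrArg (· ^ 2) hu
    simpa [enorm3, Real.sq_sqrt (show (0:ℝ) ≤ u 0 ^ 2 + u 1 ^ 2 + u 2 ^ 2 by positivity)]
      using h
  have hv2 : v 0 ^ 2 + v 1 ^ 2 + v 2 ^ 2 = 1 := by
    have h := congrArg (· ^ 2) hv
    simpa [enorm3, Real.sq_sqrt (show (0:ℝ) ≤ v 0 ^ 2 + v 1 ^ 2 + v 2 ^ 2 by positivity)]
      using h
  have hxvdef : xv = (4 * a / s) • u := rfl
  have hyvdef : yv = (4 * b / s) • v := rfl
  have hxv2 : enorm3 xv ^ 2 = 16 * a ^ 2 / fab a b := by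
    have hsum : xv 0 ^ 2 + xv 1 ^ 2 + xv 2 ^ 2
        = (4 * a / s) ^ 2 * (u 0 ^ 2 + u 1 ^ 2 + u 2 ^ 2) := by
      simp [hxvdef]; ring
    rw [enorm3, Real.sq_sqrt (by positivity), hsum, hu2, mul_one, div_pow, hs2]
    ring
  have hyv2 : enorm3 yv ^ 2 = 16 * b ^ 2 / fab a b := by
    have hsum : yv 0 ^ 2 + yv 1 ^ 2 + yv 2 ^ 2
        = (4 * b / s) ^ 2 * (v 0 ^ 2 + v 1 ^ 2 + v 2 ^ 2) := by
      simp [hyvdef]; ring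
    rw [enorm3, Real.sq_sqrt (by positivity), hsum, hv2, mul_one, div_pow, hs2]
    ring
  have hx0 : x 0 = (4 + a ^ 2 - b ^ 2) / s := by
    show Real.sqrt (1 + enorm3 xv ^ 2) = _
    rw [hxv2]
    have h1 : 1 + 16 * a ^ 2 / fab a b = ((4 + a ^ 2 - b ^ 2) / s) ^ 2 := by
      rw [div_pow, hs2]
      field_simp
      unfold fab; ring
    rw [h1, Real.sqrt_sq (div_nonneg (by nlinarith) hs.le)]
  have hy0 : y 0 = (4 + b ^ 2 - a ^ 2) / s := by
    show Real.sqrt (1 + enorm3 yv ^ 2) = _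
    rw [hyv2]
    have h1 : 1 + 16 * b ^ 2 / fab a b = ((4 + b ^ 2 - a ^ 2) / s) ^ 2 := by
      rw [div_pow, hs2]
      field_simp
      unfold fab; ring
    rw [h1, Real.sqrt_sq (div_nonneg (by nlinarith) hs.le)]
  have hxHyp : x ∈ Hyp := by
    constructor
    · rw [hx0]; exact div_pos (by nlinarith) hs
    · have e0 : x 0 = Real.sqrt (1 + enorm3 xv ^ 2) := rfl
      have e1 : x 1 = xv 0 := rfl
      have e2 : x 2 = xv 1 := rfl
      have e3 : x 3 = xv 2 := rfl
      have hsum : xv 0 ^ 2 + xv 1 ^ 2 + xv 2 ^ 2 = enorm3 xv ^ 2 :=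
        (Real.sq_sqrt (by positivity)).symm
      unfold mink
      rw [e0, e1, e2, e3, Real.mul_self_sqrt (by positivity)]
      linear_combination hsum
  have hyHyp : y ∈ Hyp := by
    constructor
    · rw [hy0]; exact div_pos (by nlinarith) hs
    · have e0 : y 0 = Real.sqrt (1 + enorm3 yv ^ 2) := rfl
      have e1 : y 1 = yv 0 := rfl
      have e2 : y 2 = yv 1 := rfl
      have e3 : y 3 = yv 2 := rfl
      have hsum : yv 0 ^ 2 + yv 1 ^ 2 + yv 2 ^ 2 = enorm3 yv ^ 2 :=
        (Real.sq_sqrt (by positivity)).symm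
      unfold mink
      rw [e0, e1, e2, e3, Real.mul_self_sqrt (by positivity)]
      linear_combination hsum
  refine ⟨hxHyp, hyHyp, ?_⟩
  have hsx : spat x = xv := by funext i; exact Fin.cons_succ _ _ _
  have hsy : spat y = yv := by funext i; exact Fin.cons_succ _ _ _
  have hsum0 : x 0 + y 0 = 8 / s := by
    rw [hx0, hy0, ← add_div]; congr 1; ring
  have hc : 2 / (8 / s) = s / 4 := by
    rw [div_div_eq_mul_div]; ring
  unfold pog
  rw [hsx, hsy, hsum0, hc, hxvdef, hyvdef, smul_smul, smul_smul]
  have hca : s / 4 * (4 * a / s) = a := by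
    rw [show s / 4 * (4 * a / s) = a * (s / s) by ring, div_self hs.ne', mul_one]
  have hcb : s / 4 * (4 * b / s) = b := by
    rw [show s / 4 * (4 * b / s) = b * (s / s) by ring, div_self hs.ne', mul_one]
  rw [hca, hcb]
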